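/- Let H be a connected finite simple graph and let G = H ∘ K₂ be the corona of H with K₂, with α = α(G). If α ≤ 17, then the sequence (s_0, s_1, …, s_α) is unimodal, i.e., there exists an index m with 0 ≤ m ≤ α such that s_0 ≤ s_1 ≤ ⋯ ≤ s_m and s_m ≥ s_{m+1} ≥ ⋯ ≥ s_α. -/

import Mathlib

open Finset
open scoped Classical

variable {V : Type*}

/-- `S` is an independent set in `G`: its vertices are pairwise non-adjacent. -/
def IsIndepSet (G : SimpleGraph V) (S : Finset V) : Prop :=
  ∀ ⦃u⦄, u ∈ S → ∀ ⦃v⦄, v ∈ S → ¬ G.Adj u v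

/-- The neighborhood `N(S)`: all vertices having at least one neighbor in `S`. -/
noncomputable def neigh [Fintype V] (G : SimpleGraph V) (S : Finset V) : Finset V :=
  Finset.univ.filter fun v => ∃ u ∈ S, G.Adj u v

/-- The independence number `α(G)`: the maximum size of an independent set. -/
noncomputable def indepNum [Fintype V] (G : SimpleGraph V) : ℕ :=
  (Finset.univ.filter fun S : Finset V => IsIndepSet G S).sup Finset.card

/-- `s_k`: the number of independent sets of size `k` in `G`. -/
noncomputable def indepCount [Fintype V] (G : SimpleGraph V) (k : ℕ) : ℕ :=
  (Finset.univ.filter fun S : Finset V => IsIndepSet G S ∧ S.card = k).card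

/-- A maximal independent set (not properly contained in another independent set). -/
def IsMaximalIndepSet (G : SimpleGraph V) (S : Finset V) : Prop :=
  IsIndepSet G S ∧ ∀ T : Finset V, IsIndepSet G T → S ⊆ T → S = T

/-- `G` is well-covered: all maximal independent sets have the same cardinality. -/
def IsWellCovered (G : SimpleGraph V) : Prop :=
  ∀ S T : Finset V, IsMaximalIndepSet G S → IsMaximalIndepSet G T → S.card = T.card

/-- `G` is 1-well-covered: it is well-covered, has at least two vertices, and
deleting any vertex leaves a well-covered graph. -/
def IsOneWellCovered [Fintype V] (G : SimpleGraph V) : Prop :=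
  IsWellCovered G ∧ 2 ≤ Fintype.card V ∧
    ∀ v : V, IsWellCovered (G.induce ({v}ᶜ : Set V))

/-- The corona `H ∘ K₂`: for each vertex `v` of `H`, two new vertices
(`(v, false)` and `(v, true)`) adjacent to each other and to `v` are added. -/
def corona2 (H : SimpleGraph V) : SimpleGraph (V ⊕ V × Bool) :=
  SimpleGraph.fromRel fun x y =>
    match x, y with
    | Sum.inl u, Sum.inl v => H.Adj u v
    | Sum.inl u, Sum.inr (v, _) => u = v
    | Sum.inr (u, _), Sum.inr (v, _) => u = v
    | _, _ => False


section Aux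
variable {V : Type*}

lemma corona2_adj_ll (H : SimpleGraph V) (u v : V) :
    (corona2 H).Adj (Sum.inl u) (Sum.inl v) ↔ H.Adj u v := by
  simp only [corona2, SimpleGraph.fromRel_adj]
  constructor
  · rintro ⟨hne, h | h⟩; exact h; exact h.symm
  · intro h; exact ⟨fun he => (H.ne_of_adj h (by injection he)), Or.inl h⟩

lemma corona2_adj_lr (H : SimpleGraph V) (u v : V) (b : Bool) :
    (corona2 H).Adj (Sum.inl u) (Sum.inr (v, b)) ↔ u = v := by
  simp [corona2, SimpleGraph.fromRel_adj]

lemma corona2_adj_rr (H : SimpleGraph V) (u v : V) (b c : Bool) :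
    (corona2 H).Adj (Sum.inr (u, b)) (Sum.inr (v, c)) ↔ u = v ∧ b ≠ c := by
  constructor
  · rintro ⟨hne, h | h⟩ <;> simp_all [corona2]
  · rintro ⟨rfl, hbc⟩
    exact ⟨by simp [hbc], Or.inl (by simp [corona2])⟩

lemma corona2_adj_rl (H : SimpleGraph V) (u v : V) (b : Bool) :
    (corona2 H).Adj (Sum.inr (u, b)) (Sum.inl v) ↔ u = v := by
  rw [SimpleGraph.adj_comm, corona2_adj_lr, eq_comm]

def bse : V ⊕ V × Bool → V := Sum.elim id Prod.fst

lemma injOn_bse {H : SimpleGraph V} {S : Finset (V ⊕ V × Bool)}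
    (hS : IsIndepSet (corona2 H) S) : Set.InjOn bse (S : Set (V ⊕ V × Bool)) := by
  intro x hx y hy hxy
  by_contra hne
  apply hS hx hy
  match x, y with
  | Sum.inl u, Sum.inl v => simp [bse] at hxy; exact absurd (congrArg Sum.inl hxy) hne
  | Sum.inl u, Sum.inr (v, b) =>
      simp only [bse, Sum.elim_inl, Sum.elim_inr, id] at hxy
      exact (corona2_adj_lr H u v b).mpr hxy
  | Sum.inr (u, b), Sum.inl v =>
      simp only [bse, Sum.elim_inl, Sum.elim_inr, id] at hxy
      exact (corona2_adj_rl H u v b).mpr hxy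
  | Sum.inr (u, b), Sum.inr (v, c) =>
      simp only [bse, Sum.elim_inr] at hxy
      refine (corona2_adj_rr H u v b c).mpr ⟨hxy, ?_⟩
      rintro rfl
      exact hne (by rw [hxy])

noncomputable def baseL [Fintype V] (S : Finset (V ⊕ V × Bool)) : Finset V :=
  Finset.univ.filter fun v => Sum.inl v ∈ S

noncomputable def baseR [Fintype V] (S : Finset (V ⊕ V × Bool)) : Finset V :=
  Finset.univ.filter fun v => ∃ b, Sum.inr (v, b) ∈ S

variable [Fintype V] {H : SimpleGraph V}

lemma baseL_indep {S : Finset (V ⊕ V × Bool)} (hS : IsIndepSet (corona2 H) S) :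
    IsIndepSet H (baseL S) := by
  intro u hu v hv hadj
  rw [baseL, mem_filter] at hu hv
  exact hS hu.2 hv.2 ((corona2_adj_ll H u v).mpr hadj)

lemma baseR_disj {S : Finset (V ⊕ V × Bool)} (hS : IsIndepSet (corona2 H) S) :
    baseR S ⊆ Finset.univ \ baseL S := by
  intro v hv
  rw [baseR, mem_filter] at hv
  obtain ⟨-, b, hb⟩ := hv
  rw [Finset.mem_sdiff, baseL, mem_filter]
  refine ⟨mem_univ _, fun hl => ?_⟩
  exact hS hl.2 hb ((corona2_adj_lr H v v b).mpr rfl)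

lemma card_decomp {S : Finset (V ⊕ V × Bool)} (hS : IsIndepSet (corona2 H) S) :
    (baseL S).card + (baseR S).card = S.card := by
  have h1 : (baseL S).image Sum.inl = S.filter (fun x => x.isLeft = true) := by
    ext x
    match x with
    | Sum.inl v => simp [baseL]
    | Sum.inr p => simp [baseL]
  have h2 : (S.filter fun x => ¬ (x.isLeft = true)).image bse = baseR S := by
    ext v
    simp only [Finset.mem_image, mem_filter, baseR, mem_univ, true_and]
    constructor
    · rintro ⟨x, ⟨hxS, hxr⟩, rfl⟩
      match x with
      | Sum.inl u => simp at hxr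
      | Sum.inr (u, b) => exact ⟨b, hxS⟩
    · rintro ⟨b, hb⟩
      exact ⟨Sum.inr (v, b), ⟨hb, by simp⟩, rfl⟩
  have c1 : (baseL S).card = (S.filter (fun x => x.isLeft = true)).card := by
    rw [← h1, Finset.card_image_of_injective _ Sum.inl_injective]
  have c2 : (baseR S).card = (S.filter fun x => ¬ (x.isLeft = true)).card := by
    rw [← h2]
    have hsub : (S.filter fun x : V ⊕ V × Bool => ¬ (x.isLeft = true)) ⊆ S :=
      Finset.filter_subset _ S
    exact (Finset.card_image_of_injOn (f := bse)
      (s := S.filter fun x : V ⊕ V × Bool => ¬ (x.isLeft = true))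
      ((injOn_bse hS).mono (Finset.coe_subset.mpr hsub)))
  rw [c1, c2]
  exact Finset.card_filter_add_card_filter_not
    (p := fun x : V ⊕ V × Bool => x.isLeft = true) (s := S)

noncomputable def bset [Fintype V] (A W U : Finset V) : Finset (V ⊕ V × Bool) :=
  A.image Sum.inl ∪ U.image (fun v => Sum.inr (v, true)) ∪
    (W \ U).image (fun v => Sum.inr (v, false))

lemma mem_bset [Fintype V] (A W U : Finset V) (x : V ⊕ V × Bool) :
    x ∈ bset A W U ↔ (∃ v ∈ A, x = Sum.inl v) ∨ (∃ v ∈ U, x = Sum.inr (v, true)) ∨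
      (∃ v ∈ W \ U, x = Sum.inr (v, false)) := by
  simp [bset, Finset.mem_union, Finset.mem_image, or_assoc, eq_comm]

lemma fiber_card {H : SimpleGraph V} [Fintype V] (A W : Finset V) (hA : IsIndepSet H A)
    (hW : W ⊆ Finset.univ \ A) :
    (Finset.univ.filter fun S : Finset (V ⊕ V × Bool) =>
      IsIndepSet (corona2 H) S ∧ baseL S = A ∧ baseR S = W).card = 2 ^ W.card := by
  rw [← Finset.card_powerset]
  symm
  have hWA : ∀ v ∈ W, v ∉ A := fun v hv => (Finset.mem_sdiff.mp (hW hv)).2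
  apply Finset.card_bij (fun U _ => bset A W U)
  · -- maps into the fiber
    intro U hU
    rw [Finset.mem_powerset] at hU
    refine Finset.mem_filter.mpr ⟨mem_univ _, ?_, ?_, ?_⟩
    · -- independence
      intro x hx y hy hadj
      rw [mem_bset] at hx hy
      rcases hx with ⟨u, hu, rfl⟩ | ⟨u, hu, rfl⟩ | ⟨u, hu, rfl⟩ <;>
        rcases hy with ⟨v, hv, rfl⟩ | ⟨v, hv, rfl⟩ | ⟨v, hv, rfl⟩
      · exact hA hu hv ((corona2_adj_ll H u v).mp hadj)
      · exact hWA v (hU hv) (((corona2_adj_lr H u v true).mp hadj) ▸ hu)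
      · exact hWA v (Finset.mem_sdiff.mp hv).1 (((corona2_adj_lr H u v false).mp hadj) ▸ hu)
      · exact hWA u (hU hu) (((corona2_adj_rl H u v true).mp hadj).symm ▸ hv)
      · exact ((corona2_adj_rr H u v true true).mp hadj).2 rfl
      · obtain ⟨rfl, -⟩ := (corona2_adj_rr H u v true false).mp hadj
        exact (Finset.mem_sdiff.mp hv).2 hu
      · exact hWA u (Finset.mem_sdiff.mp hu).1 (((corona2_adj_rl H u v false).mp hadj).symm ▸ hv)
      · obtain ⟨rfl, -⟩ := (corona2_adj_rr H u v false true).mp hadj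
        exact (Finset.mem_sdiff.mp hu).2 hv
      · exact ((corona2_adj_rr H u v false false).mp hadj).2 rfl
    · -- baseL = A
      ext v
      rw [baseL, mem_filter, mem_bset]
      constructor
      · rintro ⟨-, ⟨u, hu, he⟩ | ⟨u, hu, he⟩ | ⟨u, hu, he⟩⟩
        · injection he with he; exact he ▸ hu
        · exact absurd he (by simp)
        · exact absurd he (by simp)
      · intro hv
        exact ⟨mem_univ _, Or.inl ⟨v, hv, rfl⟩⟩
    · -- baseR = W
      ext v
      rw [baseR, mem_filter]
      constructor
      · rintro ⟨-, b, hb⟩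
        rw [mem_bset] at hb
        rcases hb with ⟨u, hu, he⟩ | ⟨u, hu, he⟩ | ⟨u, hu, he⟩
        · exact absurd he (by simp)
        · injection he with he; injection he with h1 h2; exact h1 ▸ hU hu
        · injection he with he; injection he with h1 h2; exact h1 ▸ (Finset.mem_sdiff.mp hu).1
      · intro hv
        by_cases hvU : v ∈ U
        · exact ⟨mem_univ _, true, (mem_bset A W U _).mpr (Or.inr (Or.inl ⟨v, hvU, rfl⟩))⟩
        · exact ⟨mem_univ _, false, (mem_bset A W U _).mpr
            (Or.inr (Or.inr ⟨v, Finset.mem_sdiff.mpr ⟨hv, hvU⟩, rfl⟩))⟩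
  · -- injective
    intro U hU U' hU' he
    ext v
    have hm : ∀ T : Finset V, T ⊆ W → (Sum.inr (v, true) ∈ bset A W T ↔ v ∈ T) := by
      intro T hT
      rw [mem_bset]
      constructor
      · rintro (⟨u, hu, h⟩ | ⟨u, hu, h⟩ | ⟨u, hu, h⟩)
        · exact absurd h (by simp)
        · injection h with h; injection h with h1 h2; exact h1.symm ▸ hu
        · injection h with h; injection h with h1 h2; exact absurd h2.symm (by simp)
      · intro hv; exact Or.inr (Or.inl ⟨v, hv, rfl⟩)
    rw [← hm U (Finset.mem_powerset.mp hU), ← hm U' (Finset.mem_powerset.mp hU'), he]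
  · -- surjective
    intro S hS
    obtain ⟨-, hind, hbL, hbR⟩ := Finset.mem_filter.mp hS
    refine ⟨W.filter (fun v => Sum.inr (v, true) ∈ S), Finset.mem_powerset.mpr
      (Finset.filter_subset _ _), ?_⟩
    have honeb : ∀ v ∈ W, ∀ b c : Bool, Sum.inr (v, b) ∈ S → Sum.inr (v, c) ∈ S → b = c := by
      intro v _ b c hb hc
      by_contra hbc
      exact hind hb hc ((corona2_adj_rr H v v b c).mpr ⟨rfl, hbc⟩)
    ext x
    rw [mem_bset]
    constructor
    · rintro (⟨u, hu, rfl⟩ | ⟨u, hu, rfl⟩ | ⟨u, hu, rfl⟩)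
      · have : u ∈ baseL S := hbL ▸ hu
        rw [baseL, mem_filter] at this
        exact this.2
      · exact (Finset.mem_filter.mp hu).2
      · obtain ⟨huW, huU⟩ := Finset.mem_sdiff.mp hu
        have : u ∈ baseR S := hbR ▸ huW
        rw [baseR, mem_filter] at this
        obtain ⟨-, b, hb⟩ := this
        cases b with
        | false => exact hb
        | true => exact absurd (Finset.mem_filter.mpr ⟨huW, hb⟩) huU
    · intro hx
      match x with
      | Sum.inl v =>
        refine Or.inl ⟨v, ?_, rfl⟩
        have : v ∈ baseL S := by rw [baseL, mem_filter]; exact ⟨mem_univ _, hx⟩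
        exact hbL ▸ this
      | Sum.inr (v, b) =>
        have hvW : v ∈ W := by
          have : v ∈ baseR S := by rw [baseR, mem_filter]; exact ⟨mem_univ _, b, hx⟩
          exact hbR ▸ this
        cases b with
        | true => exact Or.inr (Or.inl ⟨v, Finset.mem_filter.mpr ⟨hvW, hx⟩, rfl⟩)
        | false =>
          refine Or.inr (Or.inr ⟨v, Finset.mem_sdiff.mpr ⟨hvW, fun hvU => ?_⟩, rfl⟩)
          exact absurd (honeb v hvW true false (Finset.mem_filter.mp hvU).2 hx) (by simp)

lemma corona2_formula {H : SimpleGraph V} [Fintype V] (k : ℕ) :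
    indepCount (corona2 H) k = ∑ j ∈ Finset.range (k + 1),
      indepCount H j * Nat.choose (Fintype.card V - j) (k - j) * 2 ^ (k - j) := by
  classical
  set n := Fintype.card V with hn
  set FG : Finset (Finset (V ⊕ V × Bool)) :=
    Finset.univ.filter fun S => IsIndepSet (corona2 H) S ∧ S.card = k with hFG
  set P : Finset (Finset V × Finset V) :=
    Finset.univ.filter fun p => IsIndepSet H p.1 ∧ p.2 ⊆ Finset.univ \ p.1 ∧
      p.1.card + p.2.card = k with hP
  have step1 : indepCount (corona2 H) k =
      ∑ p ∈ P, (FG.filter fun S => (baseL S, baseR S) = p).card := by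
    rw [indepCount, ← hFG]
    apply Finset.card_eq_sum_card_fiberwise
    intro S hS
    obtain ⟨-, hind, hcard⟩ := Finset.mem_filter.mp hS
    exact Finset.mem_filter.mpr ⟨mem_univ _, baseL_indep hind, baseR_disj hind,
      by rw [card_decomp hind, hcard]⟩
  have step2 : ∀ p ∈ P, (FG.filter fun S => (baseL S, baseR S) = p).card = 2 ^ p.2.card := by
    rintro ⟨A, W⟩ hp
    obtain ⟨-, hA, hW, hsum⟩ := Finset.mem_filter.mp hp
    rw [← fiber_card A W hA hW]
    congr 1
    ext S
    simp only [hFG, Finset.mem_filter, Finset.filter_filter, mem_univ, true_and,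
      Prod.mk.injEq]
    constructor
    · rintro ⟨⟨hind, hcard⟩, hbL, hbR⟩
      exact ⟨hind, hbL, hbR⟩
    · rintro ⟨hind, hbL, hbR⟩
      refine ⟨⟨hind, ?_⟩, hbL, hbR⟩
      rw [← card_decomp hind, hbL, hbR, hsum]
  have step3 : indepCount (corona2 H) k = ∑ p ∈ P, 2 ^ p.2.card := by
    rw [step1]; exact Finset.sum_congr rfl step2
  set TA : Finset (Finset V) :=
    Finset.univ.filter fun A => IsIndepSet H A ∧ A.card ≤ k with hTA
  have step4 : ∑ p ∈ P, 2 ^ p.2.card =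
      ∑ A ∈ TA, ∑ p ∈ P.filter (fun p => p.1 = A), 2 ^ p.2.card := by
    symm
    apply Finset.sum_fiberwise_of_maps_to
    intro p hp
    obtain ⟨-, hA, hW, hsum⟩ := Finset.mem_filter.mp hp
    exact Finset.mem_filter.mpr ⟨mem_univ _, hA, by omega⟩
  have step5 : ∀ A ∈ TA, ∑ p ∈ P.filter (fun p => p.1 = A), 2 ^ p.2.card =
      Nat.choose (n - A.card) (k - A.card) * 2 ^ (k - A.card) := by
    intro A hA
    obtain ⟨-, hAind, hAcard⟩ := Finset.mem_filter.mp hA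
    have hbij : ∑ p ∈ P.filter (fun p => p.1 = A), 2 ^ p.2.card =
        ∑ W ∈ Finset.powersetCard (k - A.card) (Finset.univ \ A), 2 ^ W.card := by
      apply Finset.sum_nbij' (fun p => p.2) (fun W => (A, W))
      · rintro ⟨A', W⟩ hp
        rw [Finset.mem_filter, hP, Finset.mem_filter] at hp
        obtain ⟨⟨-, hind, hsub, hsum⟩, heq⟩ := hp
        have heq' : A' = A := heq
        subst heq'
        have hsum' : A'.card + W.card = k := hsum
        have hsub' : W ⊆ Finset.univ \ A' := hsub
        refine Finset.mem_powersetCard.mpr ⟨hsub', ?_⟩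
        show W.card = k - A'.card
        omega
      · intro W hW
        obtain ⟨hsub, hcard⟩ := Finset.mem_powersetCard.mp hW
        refine Finset.mem_filter.mpr ⟨Finset.mem_filter.mpr
          ⟨mem_univ _, hAind, hsub, ?_⟩, rfl⟩
        show A.card + W.card = k
        omega
      · rintro ⟨A', W⟩ hp
        rw [Finset.mem_filter] at hp
        have h1 : A' = A := hp.2
        rw [h1]
      · intro W _; rfl
      · rintro ⟨A', W⟩ hp; rfl
    rw [hbij]
    have hcc : ∀ W ∈ Finset.powersetCard (k - A.card) (Finset.univ \ A),
        2 ^ W.card = 2 ^ (k - A.card) := by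
      intro W hW
      rw [(Finset.mem_powersetCard.mp hW).2]
    rw [Finset.sum_congr rfl hcc, Finset.sum_const, Finset.card_powersetCard,
      smul_eq_mul]
    congr 2
    rw [Finset.card_sdiff_of_subset (Finset.subset_univ _), Finset.card_univ]
  have step6 : indepCount (corona2 H) k =
      ∑ A ∈ TA, Nat.choose (n - A.card) (k - A.card) * 2 ^ (k - A.card) := by
    rw [step3, step4]; exact Finset.sum_congr rfl step5
  rw [step6]
  symm
  have step7 : ∑ A ∈ TA, Nat.choose (n - A.card) (k - A.card) * 2 ^ (k - A.card) =
      ∑ j ∈ Finset.range (k + 1), ∑ A ∈ TA.filter (fun A => A.card = j),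
        Nat.choose (n - A.card) (k - A.card) * 2 ^ (k - A.card) := by
    symm
    apply Finset.sum_fiberwise_of_maps_to
    intro A hA
    obtain ⟨-, -, hAcard⟩ := Finset.mem_filter.mp hA
    exact Finset.mem_range.mpr (by omega)
  rw [step7]
  apply Finset.sum_congr rfl
  intro j hj
  have hjk : j ≤ k := by
    have := Finset.mem_range.mp hj; omega
  have hfil : TA.filter (fun A => A.card = j) =
      Finset.univ.filter fun A : Finset V => IsIndepSet H A ∧ A.card = j := by
    ext A
    simp only [hTA, Finset.mem_filter, Finset.filter_filter, mem_univ, true_and]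
    constructor
    · rintro ⟨⟨hi, -⟩, hc⟩; exact ⟨hi, hc⟩
    · rintro ⟨hi, hc⟩; exact ⟨⟨hi, by omega⟩, hc⟩
  have hconst : ∀ A ∈ TA.filter (fun A => A.card = j),
      Nat.choose (n - A.card) (k - A.card) * 2 ^ (k - A.card) =
        Nat.choose (n - j) (k - j) * 2 ^ (k - j) := by
    intro A hA
    rw [(Finset.mem_filter.mp hA).2]
  rw [Finset.sum_congr rfl hconst, Finset.sum_const, hfil, smul_eq_mul]
  rw [indepCount, mul_assoc]

lemma card_le_of_indep {H : SimpleGraph V} [Fintype V] {S : Finset (V ⊕ V × Bool)}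
    (hS : IsIndepSet (corona2 H) S) : S.card ≤ Fintype.card V := by
  rw [← Finset.card_univ]
  exact Finset.card_le_card_of_injOn bse (fun x _ => mem_univ _) (injOn_bse hS)

lemma indepNum_corona2 (H : SimpleGraph V) [Fintype V] :
    indepNum (corona2 H) = Fintype.card V := by
  apply le_antisymm
  · apply Finset.sup_le
    intro S hS
    exact card_le_of_indep (Finset.mem_filter.mp hS).2
  · have hmem : (univ.image fun v : V => (Sum.inr (v, false) : V ⊕ V × Bool)) ∈
        Finset.univ.filter fun S : Finset (V ⊕ V × Bool) => IsIndepSet (corona2 H) S := by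
      refine Finset.mem_filter.mpr ⟨mem_univ _, ?_⟩
      intro x hx y hy
      simp only [Finset.mem_image, mem_univ, true_and] at hx hy
      obtain ⟨u, rfl⟩ := hx
      obtain ⟨v, rfl⟩ := hy
      rw [corona2_adj_rr]
      rintro ⟨-, h⟩; exact h rfl
    calc Fintype.card V = (univ.image fun v : V => (Sum.inr (v, false) : V ⊕ V × Bool)).card := by
          rw [Finset.card_image_of_injective _ (by intro a b h; injection h with h; exact congrArg Prod.fst h), Finset.card_univ]
      _ ≤ _ := Finset.le_sup hmem

lemma indepCount_zero [Fintype V] (G : SimpleGraph V) : indepCount G 0 = 1 := by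
  rw [indepCount]
  have : (Finset.univ.filter fun S : Finset V => IsIndepSet G S ∧ S.card = 0) = {∅} := by
    ext S
    simp only [mem_filter, mem_univ, true_and, mem_singleton, card_eq_zero]
    constructor
    · exact fun h => h.2
    · rintro rfl
      exact ⟨fun u hu => absurd hu (Finset.notMem_empty u), rfl⟩
  rw [this, Finset.card_singleton]

lemma isIndepSet_singleton [Fintype V] (G : SimpleGraph V) (v : V) :
    IsIndepSet G ({v} : Finset V) := by
  intro a ha b hb
  simp only [mem_singleton] at ha hb
  subst ha; subst hb; exact G.loopless.irrefl _

lemma indepCount_one [Fintype V] (G : SimpleGraph V) :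
    indepCount G 1 = Fintype.card V := by
  rw [indepCount, ← Finset.card_univ]
  symm
  apply Finset.card_bij (fun v _ => ({v} : Finset V))
  · intro v _
    exact mem_filter.mpr ⟨mem_univ _, isIndepSet_singleton G v, Finset.card_singleton v⟩
  · intro a _ b _ h
    exact Finset.singleton_injective h
  · intro S hS
    obtain ⟨v, rfl⟩ := Finset.card_eq_one.mp (Finset.mem_filter.mp hS).2.2
    exact ⟨v, mem_univ v, rfl⟩

lemma exists_adj_of_connected [Fintype V] {H : SimpleGraph V} (hconn : H.Connected)
    (h2 : 2 ≤ Fintype.card V) (u : V) : ∃ w, H.Adj u w := by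
  obtain ⟨v, hv⟩ := Fintype.exists_ne_of_one_lt_card (by omega) u
  obtain ⟨p⟩ := hconn.preconnected v u
  clear h2
  induction p with
  | nil => exact absurd rfl hv
  | @cons a b c h p ih =>
    rcases eq_or_ne b c with rfl | hbc
    · exact ⟨a, h.symm⟩
    · exact ih hbc

lemma chain_ineq [Fintype V] {H : SimpleGraph V} (hconn : H.Connected)
    (h2 : 2 ≤ Fintype.card V) (j : ℕ) (hj : 1 ≤ j) :
    (j + 1) * indepCount H (j + 1) ≤ (Fintype.card V - 1 - j) * indepCount H j := by
  classical
  set n := Fintype.card V with hn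
  set I : ℕ → Finset (Finset V) :=
    fun t => Finset.univ.filter fun S : Finset V => IsIndepSet H S ∧ S.card = t with hI
  set ext : Finset V → Finset V :=
    fun T => Finset.univ.filter fun v => v ∉ T ∧ ∀ u ∈ T, ¬ H.Adj u v with hext
  have lhs : ((I (j+1)).sigma fun S => S).card = (j + 1) * (I (j+1)).card := by
    rw [Finset.card_sigma]
    rw [Finset.sum_congr rfl (fun S hS => (Finset.mem_filter.mp hS).2.2)]
    rw [Finset.sum_const, smul_eq_mul, mul_comm]
  have rhs : ((I j).sigma fun T => ext T).card ≤ (I j).card * (n - 1 - j) := by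
    rw [Finset.card_sigma]
    calc ∑ T ∈ I j, (ext T).card ≤ ∑ _T ∈ I j, (n - 1 - j) := ?_
      _ = (I j).card * (n - 1 - j) := by rw [Finset.sum_const, smul_eq_mul]
    apply Finset.sum_le_sum
    intro T hT
    obtain ⟨-, hTind, hTcard⟩ := Finset.mem_filter.mp hT
    have hTne : T.Nonempty := Finset.card_pos.mp (by omega)
    obtain ⟨u, hu⟩ := hTne
    obtain ⟨w, hw⟩ := exists_adj_of_connected hconn h2 u
    have hwT : w ∉ T := fun hwt => hTind hu hwt hw
    have hsub : ext T ⊆ Finset.univ \ insert w T := by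
      intro v hv
      obtain ⟨-, hvT, hvadj⟩ := Finset.mem_filter.mp hv
      rw [Finset.mem_sdiff, Finset.mem_insert]
      refine ⟨mem_univ _, ?_⟩
      rintro (rfl | hvT')
      · exact hvadj u hu hw
      · exact hvT hvT'
    calc (ext T).card ≤ (Finset.univ \ insert w T).card := Finset.card_le_card hsub
      _ = n - (j + 1) := by
          rw [Finset.card_sdiff_of_subset (Finset.subset_univ _), Finset.card_univ,
            Finset.card_insert_of_notMem hwT, hTcard]
      _ = n - 1 - j := by omega
  have inj : ((I (j+1)).sigma fun S => S).card ≤ ((I j).sigma fun T => ext T).card := by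
    apply Finset.card_le_card_of_injOn (fun p => ⟨p.1.erase p.2, p.2⟩)
    · intro p hp
      rw [Finset.mem_coe, Finset.mem_sigma] at hp ⊢
      obtain ⟨hp1, hp2⟩ := hp
      obtain ⟨-, hind, hcard⟩ := Finset.mem_filter.mp hp1
      constructor
      · refine Finset.mem_filter.mpr ⟨mem_univ _, ?_, ?_⟩
        · intro a ha b hb
          exact hind (Finset.erase_subset _ _ ha) (Finset.erase_subset _ _ hb)
        · rw [Finset.card_erase_of_mem hp2, hcard]; rfl
      · refine Finset.mem_filter.mpr ⟨mem_univ _, Finset.notMem_erase _ _, ?_⟩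
        intro a ha
        exact hind (Finset.erase_subset _ _ ha) hp2
    · intro p hp q hq hpq
      rw [Finset.mem_coe, Finset.mem_sigma] at hp hq
      obtain ⟨h1, h2⟩ := Sigma.mk.inj_iff.mp hpq
      have h2' : p.2 = q.2 := eq_of_heq h2
      have : p.1 = q.1 := by
        rw [← Finset.insert_erase hp.2, ← Finset.insert_erase hq.2, h1, h2']
      exact Sigma.ext this h2
  calc (j + 1) * indepCount H (j + 1) = ((I (j+1)).sigma fun S => S).card := lhs.symm
    _ ≤ ((I j).sigma fun T => ext T).card := inj
    _ ≤ (I j).card * (n - 1 - j) := rhs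
    _ = (n - 1 - j) * indepCount H j := mul_comm _ _

lemma choose_le_two_mul_choose_succ {m t : ℕ} (h : 3 * t + 1 ≤ 2 * m) :
    Nat.choose m t ≤ 2 * Nat.choose m (t + 1) := by
  have key : Nat.choose m (t + 1) * (t + 1) = Nat.choose m t * (m - t) :=
    Nat.choose_succ_right_eq m t
  have h1 : Nat.choose m t * (t + 1) ≤ Nat.choose m t * (2 * (m - t)) :=
    Nat.mul_le_mul_left _ (by omega)
  have h2 : Nat.choose m t * (2 * (m - t)) = 2 * Nat.choose m (t + 1) * (t + 1) := by
    calc Nat.choose m t * (2 * (m - t)) = 2 * (Nat.choose m t * (m - t)) := by ring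
      _ = 2 * (Nat.choose m (t + 1) * (t + 1)) := by rw [key]
      _ = 2 * Nat.choose m (t + 1) * (t + 1) := by ring
  have h3 : Nat.choose m t * (t + 1) ≤ 2 * Nat.choose m (t + 1) * (t + 1) := by
    omega
  exact Nat.le_of_mul_le_mul_right h3 (Nat.succ_pos t)


lemma inc_side [Fintype V] {H : SimpleGraph V} (n : ℕ) (hn : Fintype.card V = n)
    (k : ℕ) (h : 3 * k + 1 ≤ 2 * n) :
    indepCount (corona2 H) k ≤ indepCount (corona2 H) (k + 1) := by
  rw [corona2_formula, corona2_formula, hn]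
  calc ∑ j ∈ Finset.range (k + 1), indepCount H j * Nat.choose (n - j) (k - j) * 2 ^ (k - j)
      ≤ ∑ j ∈ Finset.range (k + 1),
          indepCount H j * Nat.choose (n - j) (k + 1 - j) * 2 ^ (k + 1 - j) := by
        apply Finset.sum_le_sum
        intro j hj
        have hjk : j ≤ k := by
          have := Finset.mem_range.mp hj; omega
        have e1 : k + 1 - j = (k - j) + 1 := by omega
        have hb := choose_le_two_mul_choose_succ (m := n - j) (t := k - j) (by omega)
        rw [e1, pow_succ]
        calc indepCount H j * Nat.choose (n - j) (k - j) * 2 ^ (k - j)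
            ≤ indepCount H j * (2 * Nat.choose (n - j) (k - j + 1)) * 2 ^ (k - j) :=
              Nat.mul_le_mul_right _ (Nat.mul_le_mul_left _ hb)
          _ = indepCount H j * Nat.choose (n - j) (k - j + 1) * (2 ^ (k - j) * 2) := by ring
    _ ≤ ∑ j ∈ Finset.range (k + 1 + 1),
          indepCount H j * Nat.choose (n - j) (k + 1 - j) * 2 ^ (k + 1 - j) := by
        apply Finset.sum_le_sum_of_subset
        apply Finset.range_subset_range.mpr
        omega

set_option maxHeartbeats 2000000 in
lemma dec_side [Fintype V] {H : SimpleGraph V} (hconn : H.Connected) (n : ℕ)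
    (hn : Fintype.card V = n) (h3 : 3 ≤ n) (h17 : n ≤ 17) (k : ℕ)
    (hk1 : (2 * n - 1) / 3 + 2 ≤ k) (hk2 : k + 1 ≤ n) :
    indepCount (corona2 H) (k + 1) ≤ indepCount (corona2 H) k := by
  have Fs : ∀ m, indepCount (corona2 H) m = ∑ j ∈ Finset.range (m + 1),
      indepCount H j * Nat.choose (n - j) (m - j) * 2 ^ (m - j) := by
    intro m; rw [corona2_formula, hn]
  have F0 : indepCount H 0 = 1 := indepCount_zero H
  have F1 : indepCount H 1 = n := by rw [indepCount_one, hn]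
  have ch : ∀ j, 1 ≤ j →
      (j + 1) * indepCount H (j + 1) ≤ (n - 1 - j) * indepCount H j := by
    intro j hj
    have h2 : 2 ≤ Fintype.card V := by omega
    have := chain_ineq hconn h2 j hj
    rwa [hn] at this
  have C1 := ch 1 (by omega)
  have C2 := ch 2 (by omega)
  have C3 := ch 3 (by omega)
  have C4 := ch 4 (by omega)
  have C5 := ch 5 (by omega)
  have C6 := ch 6 (by omega)
  have C7 := ch 7 (by omega)
  have C8 := ch 8 (by omega)
  have C9 := ch 9 (by omega)
  have C10 := ch 10 (by omega)
  have C11 := ch 11 (by omega)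
  have C12 := ch 12 (by omega)
  have C13 := ch 13 (by omega)
  have C14 := ch 14 (by omega)
  have C15 := ch 15 (by omega)
  have C16 := ch 16 (by omega)
  norm_num at C1 C2 C3 C4 C5 C6 C7 C8 C9 C10 C11 C12 C13 C14 C15 C16
  clear ch hconn hn
  have hku : k ≤ 16 := by omega
  interval_cases n <;> interval_cases k <;>
    first
      | omega
      | (rw [Fs, Fs];
         simp only [Finset.sum_range_succ, Finset.sum_range_zero];
         norm_num [Nat.choose];
         omega)

end Aux

/-- If `H` is a connected graph and `G = H ∘ K₂` with `α = α(G) ≤ 17`,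
then the sequence `(s_0, s_1, …, s_α)` is unimodal. -/
theorem stmt_16 {V : Type*} [Fintype V] (H : SimpleGraph V) (hconn : H.Connected)
    (G : SimpleGraph (V ⊕ V × Bool)) (hG : G = corona2 H)
    (alpha : ℕ) (ha : alpha = indepNum G) (ha17 : alpha ≤ 17) :
    ∃ m : ℕ, m ≤ alpha ∧
      (∀ k : ℕ, k < m → indepCount G k ≤ indepCount G (k + 1)) ∧
      (∀ k : ℕ, m ≤ k → k < alpha → indepCount G (k + 1) ≤ indepCount G k) := by
  subst hG
  have hnV : Nonempty V := hconn.nonempty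
  have hcard : Fintype.card V = alpha := by rw [ha, indepNum_corona2]
  have hn1 : 1 ≤ alpha := by rw [← hcard]; exact Fintype.card_pos
  by_cases hsmall : alpha ≤ 2
  · refine ⟨alpha, le_refl _, ?_, ?_⟩
    · intro k hk
      exact inc_side alpha hcard k (by omega)
    · intro k hk1 hk2; omega
  · push_neg at hsmall
    have h3 : 3 ≤ alpha := hsmall
    by_cases hcmp : indepCount (corona2 H) ((2 * alpha - 1) / 3 + 1 + 1) ≤
        indepCount (corona2 H) ((2 * alpha - 1) / 3 + 1)
    · refine ⟨(2 * alpha - 1) / 3 + 1, by omega, ?_, ?_⟩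
      · intro k hk
        exact inc_side alpha hcard k (by omega)
      · intro k hk1 hk2
        rcases eq_or_lt_of_le hk1 with heq | hlt
        · rw [← heq]; exact hcmp
        · exact dec_side hconn alpha hcard h3 ha17 k (by omega) (by omega)
    · refine ⟨(2 * alpha - 1) / 3 + 1 + 1, by omega, ?_, ?_⟩
      · intro k hk
        rcases Nat.lt_succ_iff_lt_or_eq.mp hk with hlt | heq
        · exact inc_side alpha hcard k (by omega)
        · rw [heq]; exact le_of_not_ge hcmp
      · intro k hk1 hk2
        exact dec_side hconn alpha hcard h3 ha17 k (by omega) (by omega)
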